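/- For every (r₀, r₁, r₂, r₃) ∈ ℝ⁴ with r₀ ≥ 0 and r₀² ≥ r₁² + r₂² + r₃², there exist vectors φ₁, φ₂ ∈ ℂ² such that r₀ = ‖φ₁‖² + ‖φ₂‖², r₁ = 2·Re⟨φ₁, φ₂⟩, r₂ = 2·Im⟨φ₁, φ₂⟩, and r₃ = ‖φ₁‖² − ‖φ₂‖², where ⟨·,·⟩ is the standard Hermitian inner product on ℂ² (conjugate-linear in the first argument). -/

import Mathlib

noncomputable def vec2 (x y : ℂ) : EuclideanSpace ℂ (Fin 2) :=
  (WithLp.equiv 2 (Fin 2 → ℂ)).symm ![x, y]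

lemma norm_sq_vec2 (x y : ℂ) : ‖vec2 x y‖ ^ 2 = ‖x‖ ^ 2 + ‖y‖ ^ 2 := by
  rw [EuclideanSpace.norm_eq]
  rw [Real.sq_sqrt (by positivity)]
  simp [vec2, Fin.sum_univ_two]

lemma inner_vec2 (x y z w : ℂ) :
    (inner ℂ (vec2 x y) (vec2 z w) : ℂ) = starRingEnd ℂ x * z + starRingEnd ℂ y * w := by
  simp [vec2, PiLp.inner_apply, Fin.sum_univ_two]; ring

theorem stmt_12 (r₀ r₁ r₂ r₃ : ℝ)
    (h0 : 0 ≤ r₀) (hcone : r₁ ^ 2 + r₂ ^ 2 + r₃ ^ 2 ≤ r₀ ^ 2) :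
    ∃ φ₁ φ₂ : EuclideanSpace ℂ (Fin 2),
      r₀ = ‖φ₁‖ ^ 2 + ‖φ₂‖ ^ 2 ∧
      r₁ = 2 * (inner ℂ φ₁ φ₂ : ℂ).re ∧
      r₂ = 2 * (inner ℂ φ₁ φ₂ : ℂ).im ∧
      r₃ = ‖φ₁‖ ^ 2 - ‖φ₂‖ ^ 2 := by
  rcases eq_or_lt_of_le (show 0 ≤ r₀ + r₃ by nlinarith) with hdeg | hpos
  · -- degenerate case: r₃ = -r₀, r₁ = r₂ = 0
    have hr1 : r₁ = 0 := by nlinarith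
    have hr2 : r₂ = 0 := by nlinarith
    refine ⟨vec2 0 0, vec2 (Real.sqrt r₀) 0, ?_, ?_, ?_, ?_⟩
    · rw [norm_sq_vec2, norm_sq_vec2]; simp [Real.sq_sqrt h0]
    · rw [inner_vec2]; simp [hr1]
    · rw [inner_vec2]; simp [hr2]
    · rw [norm_sq_vec2, norm_sq_vec2]; simp [Real.sq_sqrt h0]; linarith
  · set a : ℝ := Real.sqrt ((r₀ + r₃) / 2) with ha
    have ha0 : 0 < a := Real.sqrt_pos.mpr (by linarith)
    have ha2 : a ^ 2 = (r₀ + r₃) / 2 := Real.sq_sqrt (by linarith)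
    set cc : ℝ := (r₀ - r₃) / 2 - (r₁ ^ 2 + r₂ ^ 2) / (2 * (r₀ + r₃)) with hcc
    have hcc0 : 0 ≤ cc := by
      rw [hcc, sub_nonneg, div_le_div_iff₀ (by linarith) (by norm_num)]
      nlinarith
    set c : ℝ := Real.sqrt cc with hc
    have hc2 : c ^ 2 = cc := Real.sq_sqrt hcc0
    have hane : (a : ℂ) ≠ 0 := by exact_mod_cast ha0.ne'
    have hz : ‖((r₁ : ℂ) + r₂ * Complex.I) / (2 * a)‖ ^ 2
        = (r₁ ^ 2 + r₂ ^ 2) / (2 * (r₀ + r₃)) := by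
      have hd : ‖(2 * (a : ℂ))‖ = 2 * a := by
        rw [norm_mul, Complex.norm_two, Complex.norm_real, Real.norm_eq_abs, abs_of_pos ha0]
      have hsq : (2 * a) ^ 2 = 2 * (r₀ + r₃) := by
        rw [mul_pow, ha2]; ring
      rw [norm_div, div_pow, Complex.norm_add_mul_I,
        Real.sq_sqrt (by positivity), hd, hsq]
    have hinner : (inner ℂ (vec2 a 0) (vec2 ((r₁ + r₂ * Complex.I) / (2 * a)) c) : ℂ)
        = (r₁ : ℂ) / 2 + (r₂ / 2) * Complex.I := by
      rw [inner_vec2, Complex.conj_ofReal, map_zero]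
      field_simp
      ring
    refine ⟨vec2 a 0, vec2 ((r₁ + r₂ * Complex.I) / (2 * a)) c, ?_, ?_, ?_, ?_⟩
    · rw [norm_sq_vec2, norm_sq_vec2, hz]
      simp only [Complex.norm_real, Real.norm_eq_abs, sq_abs, norm_zero]
      rw [ha2, hc2, hcc]; ring
    · rw [hinner]; simp; ring
    · rw [hinner]; simp; ring
    · rw [norm_sq_vec2, norm_sq_vec2, hz]
      simp only [Complex.norm_real, Real.norm_eq_abs, sq_abs, norm_zero]
      rw [ha2, hc2, hcc]; ring
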